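/- Let G be a finitely generated abelian group and let ε : G → G be a group homomorphism such that ε ∘ ε equals multiplication by 2 on G. Then the quotient G/ε(G) is finite and (Nat.card (G/ε(G)))² = Nat.card (G/2G) · Nat.card (G[ε]/ε(G[2])). -/

import Mathlib

theorem card_quotient_sqrt_two_mul {G : Type*} [AddCommGroup G]
    (hFG : AddGroup.FG G) (ε : G →+ G)
    (hε : ε.comp ε = 2 • AddMonoidHom.id G) :
    Finite (G ⧸ ε.range) ∧
      Nat.card (G ⧸ ε.range) ^ 2 =
        Nat.card (G ⧸ (2 • AddMonoidHom.id G).range) *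
          Nat.card (ε.ker ⧸
            ((AddSubgroup.map ε (AddMonoidHom.ker (2 • AddMonoidHom.id G))).addSubgroupOf
              ε.ker)) := by
  classical
  set T : AddSubgroup G := (2 • AddMonoidHom.id G).range with hT
  set E : AddSubgroup G := ε.range with hE
  set K : AddSubgroup G := ε.ker with hK
  have hεε : ∀ x : G, ε (ε x) = 2 • x := by
    intro x
    have := DFunLike.congr_fun hε x
    simpa using this
  -- T ≤ E
  have hTE : T ≤ E := by
    rintro x ⟨y, rfl⟩
    exact ⟨ε y, by simpa using hεε y⟩
  -- G ⧸ T is finite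
  have hQfg : AddGroup.FG (G ⧸ T) := AddGroup.fg_of_surjective
    (QuotientAddGroup.mk'_surjective T)
  have hTor : AddMonoid.IsTorsion (G ⧸ T) := by
    intro x
    induction x using QuotientAddGroup.induction_on with
    | H g =>
      refine isOfFinAddOrder_iff_nsmul_eq_zero.mpr ⟨2, by norm_num, ?_⟩
      rw [← QuotientAddGroup.mk_nsmul, QuotientAddGroup.eq_zero_iff]
      exact ⟨g, by simp⟩
  have hQT : Finite (G ⧸ T) := AddCommGroup.finite_of_fg_torsion _ hTor
  -- G ⧸ E is finite (quotient of G ⧸ T)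
  have hQE : Finite (G ⧸ E) := by
    have : Function.Surjective
        (QuotientAddGroup.map T E (AddMonoidHom.id G) (by simpa using hTE)) := by
      intro x
      induction x using QuotientAddGroup.induction_on with
      | H g => exact ⟨QuotientAddGroup.mk g, rfl⟩
    exact Finite.of_surjective _ this
  refine ⟨hQE, ?_⟩
  -- the mapped subgroup is E ⊓ K
  have hmap : AddSubgroup.map ε (AddMonoidHom.ker (2 • AddMonoidHom.id G)) = E ⊓ K := by
    ext x
    constructor
    · rintro ⟨y, hy, rfl⟩
      have hy2 : (2 : ℕ) • y = 0 := by simpa using hy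
      refine ⟨⟨y, rfl⟩, ?_⟩
      show ε (ε y) = 0
      rw [hεε y]; simpa using hy2
    · rintro ⟨⟨y, rfl⟩, hx⟩
      have : ε (ε y) = 0 := hx
      have h0 : (2 : ℕ) • y = 0 := by rw [← hεε y]; simpa using this
      exact ⟨y, by simpa using h0, rfl⟩
  -- comap ε T = E ⊔ K
  have hcomap : T.comap ε = E ⊔ K := by
    ext x
    constructor
    · rintro ⟨y, hy⟩
      -- ε x = 2 • y = ε (ε y)
      have : ε (x - ε y) = 0 := by
        have h2 : ε x = 2 • y := by simpa using hy.symm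
        rw [map_sub, hεε y, h2, sub_self]
      have : x = ε y + (x - ε y) := by abel
      exact AddSubgroup.mem_sup.mpr ⟨ε y, ⟨y, rfl⟩, x - ε y, ‹ε (x - ε y) = 0›, this.symm⟩
    · intro hx
      rcases AddSubgroup.mem_sup.mp hx with ⟨e, ⟨y, rfl⟩, k, hk, rfl⟩
      have : ε (ε y + k) = 2 • y := by rw [map_add, hk, add_zero, hεε y]
      exact ⟨y, by simpa using this.symm⟩
  -- index bookkeeping
  have h1 : T.relIndex E * E.index = T.index := AddSubgroup.relIndex_mul_index hTE
  have h2 : E.relIndex (E ⊔ K) * (E ⊔ K).index = E.index :=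
    AddSubgroup.relIndex_mul_index le_sup_left
  have h3 : (T.comap ε).index = T.relIndex E := by
    simpa [hE] using AddSubgroup.index_comap T ε
  have h4 : E.relIndex (E ⊔ K) = E.relIndex K := AddSubgroup.relIndex_sup_left K E
  have hsub : (AddSubgroup.map ε (AddMonoidHom.ker (2 • AddMonoidHom.id G))).addSubgroupOf K
      = E.addSubgroupOf K := by
    rw [hmap, AddSubgroup.inf_addSubgroupOf_right]
  have hcard1 : Nat.card (G ⧸ E) = E.index := rfl
  have hcard2 : Nat.card (G ⧸ T) = T.index := rfl
  have hcard3 : Nat.card (K ⧸ ((AddSubgroup.map ε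
      (AddMonoidHom.ker (2 • AddMonoidHom.id G))).addSubgroupOf K)) = E.relIndex K := by
    rw [hsub]; rfl
  rw [hcard1, hcard2, hcard3]
  have h5 : (E ⊔ K).index = T.relIndex E := by rw [← h3, hcomap]
  calc E.index ^ 2 = (E.relIndex (E ⊔ K) * (E ⊔ K).index) * E.index := by rw [h2]; ring
    _ = E.relIndex K * (T.relIndex E * E.index) := by rw [h4, h5]; ring
    _ = T.index * E.relIndex K := by rw [h1]; ring
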